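/- Let α > 0 and for an integer N ≥ 1 and t > 0 define σ_N(t) := (1/(8π²)) ∑_{n ∈ ℤ², |n| ≤ N} ( t / ⟨n⟩^{2(1−α)} − sin(2t⟨n⟩) / (2⟨n⟩^{3−2α}) ). Then there exist constants c, C, K > 0, depending only on α, such that for every t > 0: (i) 0 ≤ σ_N(t) ≤ C t N^{2α} for every integer N ≥ 1, and (ii) σ_N(t) ≥ c t N^{2α} for every integer N ≥ K/t. In particular σ_N(t) ∼ t N^{2α} as N → ∞. (This is the asymptotic behaviour of the time-dependent renormalization constant for the wave equation, equation (sigma1) of the paper.) -/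

import Mathlib

/-- Japanese bracket `⟨n⟩ = (1 + |n|²)^{1/2}` for `n ∈ ℤ²`. -/
noncomputable def jb2 (n : ℤ × ℤ) : ℝ :=
  Real.sqrt (1 + (n.1 : ℝ) ^ 2 + (n.2 : ℝ) ^ 2)

/-- Euclidean norm `|n|` for `n ∈ ℤ²`. -/
noncomputable def znorm2 (n : ℤ × ℤ) : ℝ :=
  Real.sqrt ((n.1 : ℝ) ^ 2 + (n.2 : ℝ) ^ 2)

/-- The time-dependent renormalization constant `σ_N(t)` for the wave equation. -/
noncomputable def sigmaRen (α : ℝ) (N : ℕ) (t : ℝ) : ℝ :=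
  (1 / (8 * Real.pi ^ 2)) * ∑' n : ℤ × ℤ,
    Set.indicator {m : ℤ × ℤ | znorm2 m ≤ N}
      (fun m => t / jb2 m ^ (2 * (1 - α))
        - Real.sin (2 * t * jb2 m) / (2 * jb2 m ^ (3 - 2 * α))) n

namespace Stmt9Aux

/-- the square `[-N,N]² ⊆ ℤ²`. -/
noncomputable def sqr (N : ℕ) : Finset (ℤ × ℤ) :=
  Finset.Icc (-(N:ℤ)) (N:ℤ) ×ˢ Finset.Icc (-(N:ℤ)) (N:ℤ)

lemma one_le_jb2 (n : ℤ × ℤ) : 1 ≤ jb2 n := by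
  rw [jb2, Real.le_sqrt (by norm_num) (by positivity)]
  nlinarith [sq_nonneg ((n.1:ℝ)), sq_nonneg ((n.2:ℝ))]

lemma jb2_pos (n : ℤ × ℤ) : 0 < jb2 n := lt_of_lt_of_le one_pos (one_le_jb2 n)

lemma sigma_eq (α t : ℝ) (N : ℕ) :
    sigmaRen α N t = (1 / (8 * Real.pi ^ 2)) * ∑ n ∈ sqr N,
      Set.indicator {m : ℤ × ℤ | znorm2 m ≤ N}
        (fun m => t / jb2 m ^ (2 * (1 - α))
          - Real.sin (2 * t * jb2 m) / (2 * jb2 m ^ (3 - 2 * α))) n := by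
  rw [sigmaRen]
  congr 1
  apply tsum_eq_sum
  intro b hb
  apply Set.indicator_of_notMem
  intro hmem
  apply hb
  rw [sqr, Finset.mem_product, Finset.mem_Icc, Finset.mem_Icc]
  simp only [Set.mem_setOf_eq] at hmem
  have h1 : |(b.1:ℝ)| ≤ znorm2 b := by
    rw [znorm2, ← Real.sqrt_sq_eq_abs]
    apply Real.sqrt_le_sqrt
    nlinarith [sq_nonneg ((b.2:ℝ))]
  have h2 : |(b.2:ℝ)| ≤ znorm2 b := by
    rw [znorm2, ← Real.sqrt_sq_eq_abs]
    apply Real.sqrt_le_sqrt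
    nlinarith [sq_nonneg ((b.1:ℝ))]
  have e1 : |(b.1:ℝ)| ≤ (N:ℝ) := le_trans h1 hmem
  have e2 : |(b.2:ℝ)| ≤ (N:ℝ) := le_trans h2 hmem
  rw [abs_le] at e1 e2
  constructor
  · constructor <;> [exact_mod_cast e1.1; exact_mod_cast e1.2]
  · constructor <;> [exact_mod_cast e2.1; exact_mod_cast e2.2]

-- term lemmas
lemma term_eq (α t x : ℝ) (hx : 1 ≤ x) :
    t / x ^ (2*(1-α)) - Real.sin (2*t*x) / (2 * x ^ (3-2*α))
      = x ^ (2*α-2) * (t - Real.sin (2*t*x) / (2*x)) := by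
  have hx0 : 0 < x := lt_of_lt_of_le one_pos hx
  have hy0 : 0 < x ^ (2*α-2) := Real.rpow_pos_of_pos hx0 _
  have h1 : x ^ (2*(1-α)) = (x ^ (2*α-2))⁻¹ := by
    rw [show 2*(1-α) = -(2*α-2) by ring, Real.rpow_neg hx0.le]
  have h2 : x ^ (3-2*α) = x * (x ^ (2*α-2))⁻¹ := by
    rw [show (3-2*α) = 1 + -(2*α-2) by ring, Real.rpow_add hx0, Real.rpow_one,
      Real.rpow_neg hx0.le]
  rw [h1, h2]
  field_simp

lemma term_nonneg (α t x : ℝ) (ht : 0 < t) (hx : 1 ≤ x) :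
    0 ≤ t / x ^ (2*(1-α)) - Real.sin (2*t*x) / (2 * x ^ (3-2*α)) := by
  have hx0 : 0 < x := lt_of_lt_of_le one_pos hx
  rw [term_eq α t x hx]
  have hs : Real.sin (2*t*x) ≤ 2*t*x := Real.sin_le (by positivity)
  have : Real.sin (2*t*x) / (2*x) ≤ t := by
    rw [div_le_iff₀ (by positivity)]
    nlinarith
  have hy0 : (0:ℝ) ≤ x ^ (2*α-2) := (Real.rpow_pos_of_pos hx0 _).le
  nlinarith

lemma term_le (α t x : ℝ) (ht : 0 < t) (hx : 1 ≤ x) :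
    t / x ^ (2*(1-α)) - Real.sin (2*t*x) / (2 * x ^ (3-2*α))
      ≤ 2 * t * x ^ (2*α-2) := by
  have hx0 : 0 < x := lt_of_lt_of_le one_pos hx
  have hy0 : 0 < x ^ (2*α-2) := Real.rpow_pos_of_pos hx0 _
  rw [term_eq α t x hx]
  have hs : -(2*t*x) ≤ Real.sin (2*t*x) := by
    rcases le_or_gt (2*t*x) 1 with h | h
    · have : 0 ≤ Real.sin (2*t*x) :=
        Real.sin_nonneg_of_nonneg_of_le_pi (by positivity)
          (by nlinarith [Real.pi_gt_three])
      nlinarith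
    · nlinarith [Real.neg_one_le_sin (2*t*x)]
  have : -t ≤ Real.sin (2*t*x) / (2*x) := by
    rw [le_div_iff₀ (by positivity)]
    nlinarith
  nlinarith

lemma term_ge (α t x : ℝ) (ht : 0 < t) (hx : 1 ≤ x) (htx : 1 ≤ t * x) :
    t / 2 * x ^ (2*α-2)
      ≤ t / x ^ (2*(1-α)) - Real.sin (2*t*x) / (2 * x ^ (3-2*α)) := by
  have hx0 : 0 < x := lt_of_lt_of_le one_pos hx
  have hy0 : 0 < x ^ (2*α-2) := Real.rpow_pos_of_pos hx0 _
  rw [term_eq α t x hx]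
  have hs : Real.sin (2*t*x) ≤ 1 := Real.sin_le_one _
  have : Real.sin (2*t*x) / (2*x) ≤ t/2 := by
    rw [div_le_div_iff₀ (by positivity) (by norm_num)]
    nlinarith
  nlinarith

lemma pow_sum_le {β : ℝ} (hβ : 0 < β) (N : ℕ) (hN : 1 ≤ N) :
    ∑ m ∈ Finset.Icc 1 N, (m : ℝ) ^ (β - 1) ≤ (1 + 1/β) * (N : ℝ) ^ β := by
  have hN0 : (0:ℝ) < N := by exact_mod_cast hN
  have hNb : (1:ℝ) ≤ (N:ℝ) ^ β := Real.one_le_rpow (by exact_mod_cast hN) hβ.le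
  rcases le_or_gt 1 β with hβ1 | hβ1
  · calc ∑ m ∈ Finset.Icc 1 N, (m : ℝ) ^ (β - 1)
        ≤ ∑ m ∈ Finset.Icc 1 N, (N : ℝ) ^ (β - 1) := by
          apply Finset.sum_le_sum
          intro m hm
          rw [Finset.mem_Icc] at hm
          exact Real.rpow_le_rpow (by positivity) (by exact_mod_cast hm.2) (by linarith)
      _ = N * (N:ℝ) ^ (β - 1) := by
          rw [Finset.sum_const, Nat.card_Icc]
          simp [Nat.add_sub_cancel]
      _ = (N:ℝ) ^ β := by
          rw [← Real.rpow_one_add' (by positivity) (by linarith)]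
          ring_nf
      _ ≤ (1 + 1/β) * (N:ℝ) ^ β := by
          nlinarith [Real.rpow_pos_of_pos hN0 β, one_div_pos.mpr hβ]
  · have hint : ∫ x in (1:ℝ)..(N:ℝ), x ^ (β-1) = ((N:ℝ)^β - 1)/β := by
      rw [integral_rpow (Or.inl (by linarith))]
      norm_num
    have hanti : AntitoneOn (fun x : ℝ => x ^ (β-1)) (Set.Icc (1:ℝ) (1 + (N-1 : ℕ))) := by
      intro x hx y hy hxy
      exact Real.rpow_le_rpow_of_nonpos (lt_of_lt_of_le one_pos hx.1) hxy (by linarith)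
    have hcomp := hanti.sum_le_integral
    have hN1 : ((1:ℝ) + (N-1:ℕ)) = (N:ℝ) := by
      rw [Nat.cast_sub hN]; ring
    rw [hN1, hint] at hcomp
    have hsum : ∑ m ∈ Finset.Icc 1 N, (m:ℝ) ^ (β-1)
        = 1 + ∑ i ∈ Finset.range (N-1), ((1:ℝ) + ((i+1:ℕ):ℝ)) ^ (β-1) := by
      rw [← Finset.Ico_add_one_right_eq_Icc, Finset.sum_Ico_eq_sum_range]
      have hNr : N + 1 - 1 = (N-1) + 1 := by omega
      rw [hNr, Finset.sum_range_succ']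
      push_cast
      rw [Real.one_rpow, add_comm]
    rw [hsum]
    have h2 : (((N:ℝ))^β - 1)/β ≤ (1/β) * (N:ℝ)^β := by
      rw [div_le_iff₀ hβ]
      have h3 : (0:ℝ) < (N:ℝ)^β := Real.rpow_pos_of_pos hN0 β
      rw [one_div, inv_mul_eq_div, div_mul_cancel₀ _ hβ.ne']
      linarith
    linarith

-- ℤ-indexed version over Icc 1 N
lemma pow_sum_le_int {β : ℝ} (hβ : 0 < β) (N : ℕ) (hN : 1 ≤ N) :
    ∑ a ∈ Finset.Icc (1:ℤ) (N:ℤ), ((a:ℝ)) ^ (β - 1) ≤ (1 + 1/β) * (N : ℝ) ^ β := by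
  have : ∑ a ∈ Finset.Icc (1:ℤ) (N:ℤ), ((a:ℝ)) ^ (β - 1)
      = ∑ m ∈ Finset.Icc (1:ℕ) N, (m : ℝ) ^ (β - 1) := by
    refine Finset.sum_nbij' (fun a => a.toNat) (fun m => (m:ℤ)) ?_ ?_ ?_ ?_ ?_
    · intro a ha; simp only [Finset.mem_Icc] at *; omega
    · intro m hm; simp only [Finset.mem_Icc] at *; omega
    · intro a ha; simp only [Finset.mem_Icc] at ha; simp; omega
    · intro m hm; simp only [Finset.mem_Icc] at hm; simp
    · intro a ha; simp only [Finset.mem_Icc] at ha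
      have h := Int.toNat_of_nonneg (by omega : (0:ℤ) ≤ a)
      congr 1
      exact_mod_cast h.symm
  rw [this]
  exact pow_sum_le hβ N hN

-- 1-d sum bound
lemma oneD_sum_le {α : ℝ} (hα : 0 < α) (hα1 : α < 1) (N : ℕ) (hN : 1 ≤ N) :
    ∑ a ∈ Finset.Icc (-(N:ℤ)) (N:ℤ), (1 + (a:ℝ)^2) ^ ((α-1)/2)
      ≤ (3 + 2/α) * (N : ℝ) ^ α := by
  have hNα : (1:ℝ) ≤ (N:ℝ) ^ α := Real.one_le_rpow (by exact_mod_cast hN) hα.le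
  -- termwise bound by max 1 |a| ^ (α-1)
  have hterm : ∀ a : ℤ, (1 + (a:ℝ)^2) ^ ((α-1)/2) ≤ (max 1 |(a:ℝ)|) ^ (α-1) := by
    intro a
    have hm : (0:ℝ) < max 1 |(a:ℝ)| := lt_max_of_lt_left one_pos
    have hsq : (max 1 |(a:ℝ)|)^(2:ℕ) ≤ 1 + (a:ℝ)^2 := by
      rcases max_cases (1:ℝ) |(a:ℝ)| with ⟨h, _⟩ | ⟨h, _⟩ <;> rw [h] <;>
        nlinarith [sq_abs ((a:ℝ))]
    calc (1 + (a:ℝ)^2) ^ ((α-1)/2)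
        ≤ ((max 1 |(a:ℝ)|)^(2:ℕ)) ^ ((α-1)/2) := by
          apply Real.rpow_le_rpow_of_nonpos (by positivity) hsq (by linarith)
      _ = (max 1 |(a:ℝ)|) ^ (α-1) := by
          rw [← Real.rpow_natCast (max 1 |(a:ℝ)|) 2, ← Real.rpow_mul hm.le]
          congr 1
          push_cast
          ring
  calc ∑ a ∈ Finset.Icc (-(N:ℤ)) (N:ℤ), (1 + (a:ℝ)^2) ^ ((α-1)/2)
      ≤ ∑ a ∈ Finset.Icc (-(N:ℤ)) (N:ℤ), (max 1 |(a:ℝ)|) ^ (α-1) :=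
        Finset.sum_le_sum fun a _ => hterm a
    _ ≤ (3 + 2/α) * (N : ℝ) ^ α := by
        have hsplit : Finset.Icc (-(N:ℤ)) (N:ℤ)
            = (Finset.Icc (-(N:ℤ)) (-1:ℤ)) ∪ (Finset.Icc (0:ℤ) (N:ℤ)) := by
          ext a; simp only [Finset.mem_Icc, Finset.mem_union]; omega
        have hdisj : Disjoint (Finset.Icc (-(N:ℤ)) (-1:ℤ)) (Finset.Icc (0:ℤ) (N:ℤ)) := by
          rw [Finset.disjoint_left]; intro a ha hb
          rw [Finset.mem_Icc] at *; omega
        rw [hsplit, Finset.sum_union hdisj]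
        have hneg : ∑ a ∈ Finset.Icc (-(N:ℤ)) (-1:ℤ), (max 1 |(a:ℝ)|) ^ (α-1)
            = ∑ a ∈ Finset.Icc (1:ℤ) (N:ℤ), (max 1 |(a:ℝ)|) ^ (α-1) := by
          apply Finset.sum_nbij' (fun a => -a) (fun a => -a)
          · intro a ha; rw [Finset.mem_Icc] at *; omega
          · intro a ha; rw [Finset.mem_Icc] at *; omega
          · intro a _; ring
          · intro a _; ring
          · intro a _; push_cast; rw [abs_neg]
        have hpos : ∑ a ∈ Finset.Icc (1:ℤ) (N:ℤ), (max 1 |(a:ℝ)|) ^ (α-1)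
            ≤ (1 + 1/α) * (N : ℝ) ^ α := by
          have : ∀ a ∈ Finset.Icc (1:ℤ) (N:ℤ), (max 1 |(a:ℝ)|) ^ (α-1) = ((a:ℝ)) ^ (α-1) := by
            intro a ha; rw [Finset.mem_Icc] at ha
            have h1 : (1:ℝ) ≤ (a:ℝ) := by exact_mod_cast ha.1
            rw [abs_of_nonneg (by linarith), max_eq_right h1]
          rw [Finset.sum_congr rfl this]
          exact pow_sum_le_int hα N hN
        have hzero : Finset.Icc (0:ℤ) (N:ℤ) = insert 0 (Finset.Icc (1:ℤ) (N:ℤ)) := by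
          ext a; simp only [Finset.mem_Icc, Finset.mem_insert]; omega
        rw [hneg, hzero, Finset.sum_insert (by rw [Finset.mem_Icc]; omega)]
        have h0 : (max 1 |((0:ℤ):ℝ)|) ^ (α-1) = 1 := by
          norm_num
        rw [h0]
        have h1α : 0 < 1/α := by positivity
        have hexp : (3 + 2/α) * (N:ℝ)^α = 2*((1+1/α) * (N:ℝ)^α) + (N:ℝ)^α := by ring
        rw [hexp]
        linarith

lemma grid_sum_le {α : ℝ} (hα : 0 < α) : ∃ C > 0, ∀ N : ℕ, 1 ≤ N →
    ∑ n ∈ sqr N, jb2 n ^ (2*α - 2) ≤ C * (N:ℝ) ^ (2*α) := by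
  rcases le_or_gt 1 α with hα1 | hα1
  · -- α ≥ 1
    refine ⟨9 * Real.sqrt 3 ^ (2*α-2), by positivity, fun N hN => ?_⟩
    have hN0 : (0:ℝ) < N := by exact_mod_cast hN
    have hjb : ∀ n ∈ sqr N, jb2 n ≤ Real.sqrt 3 * N := by
      intro n hn
      rw [sqr, Finset.mem_product, Finset.mem_Icc, Finset.mem_Icc] at hn
      have h1 : |(n.1:ℝ)| ≤ N := by
        rw [abs_le]; constructor <;> [exact_mod_cast hn.1.1; exact_mod_cast hn.1.2]
      have h2 : |(n.2:ℝ)| ≤ N := by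
        rw [abs_le]; constructor <;> [exact_mod_cast hn.2.1; exact_mod_cast hn.2.2]
      rw [jb2, show Real.sqrt 3 * N = Real.sqrt (3 * N^2) by
        rw [Real.sqrt_mul (by norm_num), Real.sqrt_sq hN0.le]]
      apply Real.sqrt_le_sqrt
      have hN1 : (1:ℝ) ≤ N := by exact_mod_cast hN
      have e1 : (n.1:ℝ)^2 ≤ (N:ℝ)^2 := by rw [← sq_abs]; nlinarith [abs_nonneg ((n.1:ℝ))]
      have e2 : (n.2:ℝ)^2 ≤ (N:ℝ)^2 := by rw [← sq_abs]; nlinarith [abs_nonneg ((n.2:ℝ))]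
      nlinarith
    calc ∑ n ∈ sqr N, jb2 n ^ (2*α - 2)
        ≤ ∑ n ∈ sqr N, (Real.sqrt 3 * N) ^ (2*α-2) := by
          apply Finset.sum_le_sum
          intro n hn
          exact Real.rpow_le_rpow (jb2_pos n).le (hjb n hn) (by linarith)
      _ = ((2*N+1) * (2*N+1) : ℕ) * ((Real.sqrt 3 * N) ^ (2*α-2)) := by
          rw [Finset.sum_const, sqr, Finset.card_product, Int.card_Icc]
          simp only [nsmul_eq_mul]
          congr 1
          have h' : ((N:ℤ) + 1 - -(N:ℤ)).toNat = 2*N+1 := by omega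
          rw [h']
      _ ≤ 9 * Real.sqrt 3 ^ (2*α-2) * (N:ℝ)^(2*α) := by
          have hc : (((2*N+1) * (2*N+1) : ℕ) : ℝ) ≤ 9 * (N:ℝ)^(2:ℕ) := by
            push_cast
            have : (1:ℝ) ≤ N := by exact_mod_cast hN
            nlinarith
          have hsplit : (Real.sqrt 3 * N) ^ (2*α-2)
              = Real.sqrt 3 ^ (2*α-2) * (N:ℝ) ^ (2*α-2) :=
            Real.mul_rpow (by positivity) hN0.le
          have hNN : (N:ℝ)^(2:ℕ) * (N:ℝ)^(2*α-2) = (N:ℝ)^(2*α) := by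
            rw [← Real.rpow_natCast (N:ℝ) 2, ← Real.rpow_add hN0]
            norm_num
          calc (((2*N+1) * (2*N+1) : ℕ) : ℝ) * ((Real.sqrt 3 * N) ^ (2*α-2))
              ≤ 9 * (N:ℝ)^(2:ℕ) * ((Real.sqrt 3 * N) ^ (2*α-2)) := by
                apply mul_le_mul_of_nonneg_right hc (by positivity)
            _ = 9 * Real.sqrt 3 ^ (2*α-2) * ((N:ℝ)^(2:ℕ) * (N:ℝ)^(2*α-2)) := by
                rw [hsplit]; ring
            _ = 9 * Real.sqrt 3 ^ (2*α-2) * (N:ℝ)^(2*α) := by rw [hNN]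
  · -- α < 1
    refine ⟨(3 + 2/α) * (3 + 2/α), by positivity, fun N hN => ?_⟩
    have hN0 : (0:ℝ) < N := by exact_mod_cast hN
    have hterm : ∀ n : ℤ × ℤ, jb2 n ^ (2*α-2)
        ≤ (1 + (n.1:ℝ)^2) ^ ((α-1)/2) * (1 + (n.2:ℝ)^2) ^ ((α-1)/2) := by
      intro n
      set a := (n.1:ℝ); set b := (n.2:ℝ)
      have hs : (0:ℝ) < 1 + a^2 + b^2 := by positivity
      have hprod : (0:ℝ) < (1+a^2) * (1+b^2) := by positivity
      have h1 : jb2 n ^ (2*α-2) = (1 + a^2 + b^2) ^ (α-1) := by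
        rw [jb2, Real.sqrt_eq_rpow, ← Real.rpow_mul hs.le]
        congr 1
        ring
      have h2 : ((1+a^2) * (1+b^2)) ^ ((1:ℝ)/2) ≤ 1 + a^2 + b^2 := by
        rw [← Real.sqrt_eq_rpow]
        rw [Real.sqrt_le_iff]
        constructor
        · positivity
        · nlinarith [sq_nonneg (a*b), sq_nonneg a, sq_nonneg b]
      have h3 : (1 + a^2 + b^2) ^ (α-1) ≤ (((1+a^2) * (1+b^2)) ^ ((1:ℝ)/2)) ^ (α-1) :=
        Real.rpow_le_rpow_of_nonpos (by positivity) h2 (by linarith)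
      have h4 : (((1+a^2) * (1+b^2)) ^ ((1:ℝ)/2)) ^ (α-1)
          = (1 + a^2) ^ ((α-1)/2) * (1 + b^2) ^ ((α-1)/2) := by
        rw [← Real.rpow_mul hprod.le, Real.mul_rpow (by positivity) (by positivity)]
        ring_nf
      rw [h1, ← h4]
      exact h3
    calc ∑ n ∈ sqr N, jb2 n ^ (2*α-2)
        ≤ ∑ n ∈ sqr N, (1 + (n.1:ℝ)^2) ^ ((α-1)/2) * (1 + (n.2:ℝ)^2) ^ ((α-1)/2) :=
          Finset.sum_le_sum fun n _ => hterm n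
      _ = (∑ a ∈ Finset.Icc (-(N:ℤ)) (N:ℤ), (1 + (a:ℝ)^2) ^ ((α-1)/2))
          * (∑ b ∈ Finset.Icc (-(N:ℤ)) (N:ℤ), (1 + (b:ℝ)^2) ^ ((α-1)/2)) := by
          rw [sqr, Finset.sum_product, Finset.sum_mul_sum]
      _ ≤ ((3 + 2/α) * (N:ℝ)^α) * ((3 + 2/α) * (N:ℝ)^α) := by
          have hb := oneD_sum_le hα hα1 N hN
          have hnn : (0:ℝ) ≤ ∑ a ∈ Finset.Icc (-(N:ℤ)) (N:ℤ), (1 + (a:ℝ)^2) ^ ((α-1)/2) :=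
            Finset.sum_nonneg fun a _ => by positivity
          exact mul_le_mul hb hb hnn (by positivity)
      _ = (3 + 2/α) * (3 + 2/α) * (N:ℝ)^(2*α) := by
          rw [show (2*α) = α + α by ring, Real.rpow_add hN0]
          ring



end Stmt9Aux

set_option maxHeartbeats 2000000 in
open Stmt9Aux in
/-- Asymptotics `σ_N(t) ∼ t N^{2α}` of the wave renormalization constant (equation (sigma1)). -/
theorem stmt9 (α : ℝ) (hα : 0 < α) :
    ∃ c > 0, ∃ C > 0, ∃ K > 0, ∀ t : ℝ, 0 < t →
      (∀ N : ℕ, 1 ≤ N →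
        0 ≤ sigmaRen α N t ∧ sigmaRen α N t ≤ C * t * (N : ℝ) ^ (2 * α)) ∧
      (∀ N : ℕ, K / t ≤ (N : ℝ) →
        c * t * (N : ℝ) ^ (2 * α) ≤ sigmaRen α N t) := by
  obtain ⟨C₀, hC₀, hub⟩ := grid_sum_le hα
  set c₁ := min ((9:ℝ)^(2-2*α)) (Real.sqrt 6 ^ (2*α-2)) with hc₁def
  have hc₁ : 0 < c₁ := lt_min (by positivity) (by positivity)
  have hπ : (0:ℝ) < 1/(8*Real.pi^2) := by positivity
  refine ⟨1/(8*Real.pi^2) * (c₁/18), by positivity,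
    1/(8*Real.pi^2) * (2*C₀), by positivity, 9, by norm_num, fun t ht => ⟨?_, ?_⟩⟩
  · -- nonneg and upper bound
    intro N hN
    have hN0 : (0:ℝ) < N := by exact_mod_cast hN
    rw [sigma_eq]
    set F := Set.indicator {m : ℤ × ℤ | znorm2 m ≤ (N:ℝ)}
      (fun m => t / jb2 m ^ (2 * (1 - α))
        - Real.sin (2 * t * jb2 m) / (2 * jb2 m ^ (3 - 2 * α))) with hFdef
    have hind0 : ∀ n : ℤ × ℤ, 0 ≤ F n := by
      intro n
      rw [hFdef]
      apply Set.indicator_nonneg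
      intro m _
      exact term_nonneg α t (jb2 m) ht (one_le_jb2 m)
    constructor
    · exact mul_nonneg hπ.le (Finset.sum_nonneg fun n _ => hind0 n)
    · have hstep : ∀ n ∈ sqr N, F n ≤ 2 * t * jb2 n ^ (2*α - 2) := by
        intro n _
        have hpos : 0 ≤ 2 * t * jb2 n ^ (2*α-2) := by
          have := Real.rpow_pos_of_pos (jb2_pos n) (2*α-2)
          positivity
        rw [hFdef]
        by_cases hmem : n ∈ {m : ℤ × ℤ | znorm2 m ≤ (N:ℝ)}
        · rw [Set.indicator_of_mem hmem]
          exact term_le α t (jb2 n) ht (one_le_jb2 n)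
        · rw [Set.indicator_of_notMem hmem]; exact hpos
      calc (1/(8*Real.pi^2)) * ∑ n ∈ sqr N, F n
          ≤ (1/(8*Real.pi^2)) * ∑ n ∈ sqr N, 2 * t * jb2 n ^ (2*α-2) :=
            mul_le_mul_of_nonneg_left (Finset.sum_le_sum hstep) hπ.le
        _ = (1/(8*Real.pi^2)) * (2 * t * ∑ n ∈ sqr N, jb2 n ^ (2*α-2)) := by
            rw [← Finset.mul_sum]
        _ ≤ (1/(8*Real.pi^2)) * (2 * t * (C₀ * (N:ℝ)^(2*α))) := by
            apply mul_le_mul_of_nonneg_left _ hπ.le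
            apply mul_le_mul_of_nonneg_left (hub N hN) (by positivity)
        _ = 1/(8*Real.pi^2) * (2*C₀) * t * (N:ℝ)^(2*α) := by ring
  · -- lower bound
    intro N hKN
    have hN9 : (9:ℝ) ≤ t * N := by
      rw [div_le_iff₀ ht] at hKN
      linarith [mul_comm t (N:ℝ) ▸ hKN]
    have hN0 : (0:ℝ) < N := by nlinarith
    have hN1 : 1 ≤ N := by
      by_contra h
      push_neg at h
      interval_cases N
      · simp at hN0
    set M : ℤ := (N:ℤ)/3 with hMdef
    have hM0 : 0 ≤ M := by omega
    have hM3 : 3*M ≤ (N:ℤ) := by omega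
    have hMr : (M:ℝ) ≤ (N:ℝ)/3 := by
      have h := hM3
      have : ((3*M : ℤ):ℝ) ≤ ((N:ℤ):ℝ) := by exact_mod_cast h
      push_cast at this
      linarith
    set Q : Finset (ℤ × ℤ) := Finset.Icc M (2*M) ×ˢ Finset.Icc (0:ℤ) M with hQdef
    have hQsub : Q ⊆ sqr N := by
      intro n hn
      rw [hQdef, Finset.mem_product, Finset.mem_Icc, Finset.mem_Icc] at hn
      rw [sqr, Finset.mem_product, Finset.mem_Icc, Finset.mem_Icc]
      omega
    rw [sigma_eq]
    set F := Set.indicator {m : ℤ × ℤ | znorm2 m ≤ (N:ℝ)}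
      (fun m => t / jb2 m ^ (2 * (1 - α))
        - Real.sin (2 * t * jb2 m) / (2 * jb2 m ^ (3 - 2 * α))) with hFdef
    have hind0 : ∀ n : ℤ × ℤ, 0 ≤ F n := by
      intro n
      rw [hFdef]
      apply Set.indicator_nonneg
      intro m _
      exact term_nonneg α t (jb2 m) ht (one_le_jb2 m)
    have hQfacts : ∀ n ∈ Q, znorm2 n ≤ (N:ℝ) ∧ (N:ℝ)/9 ≤ jb2 n
        ∧ jb2 n ≤ Real.sqrt 6 * N := by
      intro n hn
      rw [hQdef, Finset.mem_product, Finset.mem_Icc, Finset.mem_Icc] at hn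
      obtain ⟨⟨ha1, ha2⟩, hb1, hb2⟩ := hn
      have ha1r : (M:ℝ) ≤ (n.1:ℝ) := by exact_mod_cast ha1
      have ha2r : (n.1:ℝ) ≤ 2*(M:ℝ) := by exact_mod_cast ha2
      have hb1r : (0:ℝ) ≤ (n.2:ℝ) := by exact_mod_cast hb1
      have hb2r : (n.2:ℝ) ≤ (M:ℝ) := by exact_mod_cast hb2
      have hM0r : (0:ℝ) ≤ (M:ℝ) := by exact_mod_cast hM0
      have hN1r : (1:ℝ) ≤ (N:ℝ) := by exact_mod_cast hN1
      refine ⟨?_, ?_, ?_⟩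
      · rw [znorm2, Real.sqrt_le_iff]
        constructor
        · positivity
        · nlinarith
      · have hjb1 : (1:ℝ) ≤ jb2 n := one_le_jb2 n
        have hjbM : (M:ℝ) ≤ jb2 n := by
          rw [jb2, Real.le_sqrt hM0r (by positivity)]
          nlinarith
        rcases le_or_gt (N:ℤ) 8 with h8 | h8
        · have : (N:ℝ) ≤ 8 := by exact_mod_cast h8
          linarith
        · have h9M : (N:ℤ) ≤ 9*M := by omega
          have : (N:ℝ) ≤ 9*(M:ℝ) := by exact_mod_cast h9M
          linarith
      · rw [jb2, show Real.sqrt 6 * N = Real.sqrt (6*(N:ℝ)^2) by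
          rw [Real.sqrt_mul (by norm_num), Real.sqrt_sq hN0.le]]
        apply Real.sqrt_le_sqrt
        nlinarith
    have hptQ : ∀ n ∈ Q, t/2 * (c₁ * (N:ℝ)^(2*α-2)) ≤ F n := by
      intro n hn
      obtain ⟨hmem, hlow, hup⟩ := hQfacts n hn
      rw [hFdef, Set.indicator_of_mem (by exact hmem)]
      have hjb1 : (1:ℝ) ≤ jb2 n := one_le_jb2 n
      have htx : 1 ≤ t * jb2 n := by
        have h := mul_le_mul_of_nonneg_left hlow ht.le
        nlinarith
      have hrp : c₁ * (N:ℝ)^(2*α-2) ≤ jb2 n ^ (2*α-2) := by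
        have hNp : (0:ℝ) < (N:ℝ)^(2*α-2) := Real.rpow_pos_of_pos hN0 _
        rcases le_or_gt 0 (2*α-2) with he | he
        · have h1 : ((N:ℝ)/9) ^ (2*α-2) ≤ jb2 n ^ (2*α-2) :=
            Real.rpow_le_rpow (by positivity) hlow he
          have h2 : ((N:ℝ)/9) ^ (2*α-2) = (9:ℝ)^(2-2*α) * (N:ℝ)^(2*α-2) := by
            rw [Real.div_rpow hN0.le (by norm_num), div_eq_mul_inv,
              ← Real.rpow_neg (by norm_num : (0:ℝ) ≤ 9)]
            rw [show -(2*α-2) = 2-2*α by ring]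
            ring
          have h3 : c₁ ≤ (9:ℝ)^(2-2*α) := min_le_left _ _
          nlinarith
        · have h1 : (Real.sqrt 6 * N) ^ (2*α-2) ≤ jb2 n ^ (2*α-2) :=
            Real.rpow_le_rpow_of_nonpos (jb2_pos n) hup he.le
          have h2 : (Real.sqrt 6 * N) ^ (2*α-2)
              = Real.sqrt 6 ^ (2*α-2) * (N:ℝ)^(2*α-2) :=
            Real.mul_rpow (by positivity) hN0.le
          have h3 : c₁ ≤ Real.sqrt 6 ^ (2*α-2) := min_le_right _ _
          nlinarith
      calc t/2 * (c₁ * (N:ℝ)^(2*α-2)) ≤ t/2 * (jb2 n ^ (2*α-2)) :=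
            mul_le_mul_of_nonneg_left hrp (by positivity)
        _ ≤ _ := term_ge α t (jb2 n) ht hjb1 htx
    have hcard : ((N:ℝ)/3)^2 ≤ (Q.card : ℝ) := by
      rw [hQdef, Finset.card_product, Int.card_Icc, Int.card_Icc]
      have e1 : (2*M + 1 - M).toNat = (M+1).toNat := by omega
      have e2 : (M + 1 - 0).toNat = (M+1).toNat := by omega
      rw [e1, e2]
      have h3 : (N:ℝ) ≤ 3 * ((M+1).toNat : ℝ) := by
        have h4 : (N:ℤ) ≤ 3 * ((M+1).toNat : ℤ) := by omega
        exact_mod_cast h4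
      push_cast
      nlinarith [(Nat.cast_nonneg ((M+1).toNat) : (0:ℝ) ≤ ((M+1).toNat : ℝ))]
    have hpt : (0:ℝ) ≤ t/2 * (c₁ * (N:ℝ)^(2*α-2)) := by
      have := Real.rpow_pos_of_pos hN0 (2*α-2)
      positivity
    have hsum1 : ∑ n ∈ Q, F n ≤ ∑ n ∈ sqr N, F n :=
      Finset.sum_le_sum_of_subset_of_nonneg hQsub fun n _ _ => hind0 n
    have hsum2 : (Q.card : ℝ) * (t/2 * (c₁ * (N:ℝ)^(2*α-2))) ≤ ∑ n ∈ Q, F n := by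
      calc (Q.card : ℝ) * (t/2 * (c₁ * (N:ℝ)^(2*α-2)))
          = ∑ _n ∈ Q, t/2 * (c₁ * (N:ℝ)^(2*α-2)) := by
            rw [Finset.sum_const, nsmul_eq_mul]
        _ ≤ _ := Finset.sum_le_sum hptQ
    have hNN : ((N:ℝ)/3)^2 * (t/2 * (c₁ * (N:ℝ)^(2*α-2)))
        = (c₁/18) * t * (N:ℝ)^(2*α) := by
      have h5 : (N:ℝ)^(2:ℕ) * (N:ℝ)^(2*α-2) = (N:ℝ)^(2*α) := by
        rw [← Real.rpow_natCast (N:ℝ) 2, ← Real.rpow_add hN0]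
        norm_num
      rw [← h5]
      push_cast
      ring
    have hle : (c₁/18) * t * (N:ℝ)^(2*α) ≤ ∑ n ∈ sqr N, F n := by
      rw [← hNN]
      calc ((N:ℝ)/3)^2 * (t/2 * (c₁ * (N:ℝ)^(2*α-2)))
          ≤ (Q.card : ℝ) * (t/2 * (c₁ * (N:ℝ)^(2*α-2))) :=
            mul_le_mul_of_nonneg_right hcard hpt
        _ ≤ _ := le_trans hsum2 hsum1
    calc 1/(8*Real.pi^2) * (c₁/18) * t * (N:ℝ)^(2*α)
        = (1/(8*Real.pi^2)) * ((c₁/18) * t * (N:ℝ)^(2*α)) := by ring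
      _ ≤ _ := mul_le_mul_of_nonneg_left hle hπ.le
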